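/- Let d ≥ 2 and let u₁, u₂ : ℝ^d → ℝ be twice continuously differentiable with |∇u₁(x)| + |∇u₂(x)| ≤ 1/2 at a point x. Let F(x) = (x, u₁(x), u₂(x)) ∈ ℝ^{d+2}, let ν₁ = (1+|∇u₁|²)^{−1/2}(∇u₁, −1, 0) and ν₂ = Λ^{−1}(∇u₂ − ((∇u₁·∇u₂)/(1+|∇u₁|²))∇u₁, (∇u₁·∇u₂)/(1+|∇u₁|²), −1) be the orthonormal normal frame of the graph. Then there exists a constant C > 0 depending only on d such that for all 1 ≤ i, j ≤ d: | ∂²_{x_i x_j}F(x) · ν₁(x) + ∂²_{x_i x_j}u₁(x) | ≤ C |D²u(x)| |Du(x)|² and | ∂²_{x_i x_j}F(x) · ν₂(x) + ∂²_{x_i x_j}u₂(x) | ≤ C |D²u(x)| |Du(x)|², where |Du| = (|∇u₁|² + |∇u₂|²)^{1/2} and |D²u| = (|D²u₁|² + |D²u₂|²)^{1/2}. -/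

import Mathlib

open MeasureTheory Filter
open scoped ENNReal Topology RealInnerProductSpace

noncomputable section

abbrev Euc (d : ℕ) := EuclideanSpace ℝ (Fin d)

/-- The partial derivative `∂_{x_i} f`. -/
def pd (d : ℕ) (i : Fin d) (f : Euc d → ℝ) : Euc d → ℝ :=
  fun x => fderiv ℝ f x (EuclideanSpace.single i 1)

/-- The dot product `∇f · ∇g` of the gradients. -/
def dotGrad (d : ℕ) (f g : Euc d → ℝ) (x : Euc d) : ℝ :=
  ∑ i, pd d i f x * pd d i g x

/-- The quantity `Λ`. -/
def lamSMCF (d : ℕ) (u1 u2 : Euc d → ℝ) (x : Euc d) : ℝ :=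
  Real.sqrt ((∑ i, (pd d i u2 x -
      dotGrad d u1 u2 x / (1 + dotGrad d u1 u1 x) * pd d i u1 x) ^ 2)
    + (dotGrad d u1 u2 x / (1 + dotGrad d u1 u1 x)) ^ 2 + 1)

/-- The induced metric `g_{ij} = δ_{ij} + ∂_i u · ∂_j u` on the graph of `u = (u1, u2)`. -/
def metricSMCF (d : ℕ) (u1 u2 : Euc d → ℝ) (x : Euc d) : Matrix (Fin d) (Fin d) ℝ :=
  Matrix.of fun i j =>
    (if i = j then (1 : ℝ) else 0) + pd d i u1 x * pd d j u1 x + pd d i u2 x * pd d j u2 x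

/-- The operator `(Λ √(1+|∇u₁|²))⁻¹ Σ_{ij} g^{ij} ∂²_{x_i x_j} w`. -/
def smcfOp (d : ℕ) (u1 u2 w : Euc d → ℝ) (x : Euc d) : ℝ :=
  (lamSMCF d u1 u2 x * Real.sqrt (1 + dotGrad d u1 u1 x))⁻¹ *
    ∑ i, ∑ j, (metricSMCF d u1 u2 x)⁻¹ i j * pd d i (pd d j w) x

/-- The graph SMCF system on a time set `s`. -/
def IsSMCFOn (d : ℕ) (u1 u2 : ℝ → Euc d → ℝ) (s : Set ℝ) : Prop :=
  ∀ t ∈ s, ∀ x,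
    HasDerivWithinAt (fun τ => u1 τ x) (-(smcfOp d (u1 t) (u2 t) (u2 t) x)) s t ∧
    HasDerivWithinAt (fun τ => u2 τ x) (smcfOp d (u1 t) (u2 t) (u1 t) x) s t

/-- The `W^{k,p}` Sobolev norm, valued in `ℝ≥0∞`. -/
def eSob {F : Type*} [NormedAddCommGroup F] [NormedSpace ℝ F]
    (d : ℕ) (k : ℕ) (p : ℝ≥0∞) (f : Euc d → F) : ℝ≥0∞ :=
  ∑ n ∈ Finset.range (k + 1),
    eLpNorm (fun x => ‖iteratedFDeriv ℝ n f x‖) p volume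

/-- The `W^{k,p}` Sobolev norm, real valued. -/
def sobNorm {F : Type*} [NormedAddCommGroup F] [NormedSpace ℝ F]
    (d : ℕ) (k : ℕ) (p : ℝ≥0∞) (f : Euc d → F) : ℝ :=
  (eSob d k p f).toReal

/-- Membership in `H^∞ = ∩_k H^k`. -/
def MemHinf (d : ℕ) (f : Euc d → ℝ) : Prop := ∀ k : ℕ, eSob d k 2 f < ⊤

/-- A global-in-time smooth `H^∞` solution of the graph SMCF system with data `(u01, u02)`. -/
def IsGlobalSol (d : ℕ) (u01 u02 : Euc d → ℝ) (u1 u2 : ℝ → Euc d → ℝ) : Prop :=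
  ContDiff ℝ (⊤ : ℕ∞) (fun p : ℝ × Euc d => (u1 p.1 p.2, u2 p.1 p.2)) ∧
  IsSMCFOn d u1 u2 Set.univ ∧
  u1 0 = u01 ∧ u2 0 = u02 ∧
  ∀ t : ℝ, MemHinf d (u1 t) ∧ MemHinf d (u2 t)


/-- The vector `(v, a, b) ∈ ℝ^{d+2}` with first `d` components `v`, then `a`, then `b`. -/
def mkVec (d : ℕ) (v : Fin d → ℝ) (a b : ℝ) : Euc (d + 2) :=
  (WithLp.equiv 2 (Fin (d + 2) → ℝ)).symm (Fin.snoc (Fin.snoc v a) b)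

/-- The first normal vector `ν₁ = (1+|∇u₁|²)^{-1/2} (∇u₁, -1, 0)` of the graph. -/
def nu1 (d : ℕ) (u1 : Euc d → ℝ) (x : Euc d) : Euc (d + 2) :=
  (Real.sqrt (1 + dotGrad d u1 u1 x))⁻¹ • mkVec d (fun i => pd d i u1 x) (-1) 0

/-- The second normal vector
`ν₂ = Λ⁻¹ (∇u₂ - c ∇u₁, c, -1)`, `c = (∇u₁·∇u₂)/(1+|∇u₁|²)`. -/
def nu2 (d : ℕ) (u1 u2 : Euc d → ℝ) (x : Euc d) : Euc (d + 2) :=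
  (lamSMCF d u1 u2 x)⁻¹ • mkVec d
    (fun i => pd d i u2 x - dotGrad d u1 u2 x / (1 + dotGrad d u1 u1 x) * pd d i u1 x)
    (dotGrad d u1 u2 x / (1 + dotGrad d u1 u1 x)) (-1)

/-- The second derivative `∂²_{x_i x_j} F = (0, …, 0, ∂²_{ij}u₁, ∂²_{ij}u₂)`
of the graph map. -/
def hessVec (d : ℕ) (u1 u2 : Euc d → ℝ) (x : Euc d) (i j : Fin d) : Euc (d + 2) :=
  mkVec d (fun _ => 0) (pd d i (pd d j u1) x) (pd d i (pd d j u2) x)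


lemma inner_mkVec (d : ℕ) (v w : Fin d → ℝ) (a b a' b' : ℝ) :
    ⟪mkVec d v a b, mkVec d w a' b'⟫ = (∑ i, v i * w i) + a * a' + b * b' := by
  simp [mkVec, PiLp.inner_apply, Fin.sum_univ_castSucc, mul_comm]

lemma pd_pd_le (d : ℕ) (f : Euc d → ℝ) (hf : ContDiff ℝ 2 f) (x : Euc d) (i j : Fin d) :
    |pd d i (pd d j f) x| ≤ ‖iteratedFDeriv ℝ 2 f x‖ := by
  have hdf : ContDiff ℝ 1 (fderiv ℝ f) := hf.fderiv_right (le_refl _)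
  have h1 : HasFDerivAt (fderiv ℝ f) (fderiv ℝ (fderiv ℝ f) x) x :=
    (hdf.differentiable one_ne_zero x).hasFDerivAt
  have h2 := ((ContinuousLinearMap.apply ℝ ℝ (EuclideanSpace.single j 1)).hasFDerivAt).comp x h1
  have hfun : pd d j f =
      (⇑(ContinuousLinearMap.apply ℝ ℝ (EuclideanSpace.single j 1)) ∘ fderiv ℝ f) := rfl
  have heq : pd d i (pd d j f) x
      = iteratedFDeriv ℝ 2 f x ![EuclideanSpace.single i 1, EuclideanSpace.single j 1] := by
    rw [iteratedFDeriv_two_apply]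
    simp only [pd, Matrix.cons_val_zero, Matrix.cons_val_one, Matrix.head_cons]
    rw [hfun, h2.fderiv]
    rfl
  have hprod : (∏ k : Fin 2, ‖(![EuclideanSpace.single i 1,
      EuclideanSpace.single j 1] : Fin 2 → Euc d) k‖) = 1 := by
    simp [Fin.prod_univ_two, EuclideanSpace.norm_single]
  have hle := (iteratedFDeriv ℝ 2 f x).le_opNorm
    ![EuclideanSpace.single i 1, EuclideanSpace.single j 1]
  rw [hprod, mul_one] at hle
  rw [heq]
  exact abs_le.mpr ⟨neg_le_of_abs_le (by simpa using hle),
    le_trans (le_abs_self _) (by simpa using hle)⟩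

lemma inner_hessVec_nu1 (d : ℕ) (u1 u2 : Euc d → ℝ) (x : Euc d) (i j : Fin d) :
    ⟪hessVec d u1 u2 x i j, nu1 d u1 x⟫ =
      (Real.sqrt (1 + dotGrad d u1 u1 x))⁻¹ * (-(pd d i (pd d j u1) x)) := by
  rw [nu1, hessVec, real_inner_smul_right, inner_mkVec]
  simp only [zero_mul, Finset.sum_const_zero]
  ring

lemma inner_hessVec_nu2 (d : ℕ) (u1 u2 : Euc d → ℝ) (x : Euc d) (i j : Fin d) :
    ⟪hessVec d u1 u2 x i j, nu2 d u1 u2 x⟫ =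
      (lamSMCF d u1 u2 x)⁻¹ *
        (dotGrad d u1 u2 x / (1 + dotGrad d u1 u1 x) * pd d i (pd d j u1) x
          - pd d i (pd d j u2) x) := by
  rw [nu2, hessVec, real_inner_smul_right, inner_mkVec]
  simp only [zero_mul, Finset.sum_const_zero]
  ring

lemma lamSMCF_eq (d : ℕ) (u1 u2 : Euc d → ℝ) (x : Euc d)
    (hA0 : 0 ≤ dotGrad d u1 u1 x) :
    lamSMCF d u1 u2 x = Real.sqrt (1 + dotGrad d u2 u2 x
      - (dotGrad d u1 u2 x) ^ 2 / (1 + dotGrad d u1 u1 x)) := by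
  have h1A : (0:ℝ) < 1 + dotGrad d u1 u1 x := by linarith
  unfold lamSMCF
  congr 1
  have hS : (∑ k, (pd d k u2 x
        - dotGrad d u1 u2 x / (1 + dotGrad d u1 u1 x) * pd d k u1 x) ^ 2)
      = dotGrad d u2 u2 x
        - 2 * (dotGrad d u1 u2 x / (1 + dotGrad d u1 u1 x)) * dotGrad d u1 u2 x
        + (dotGrad d u1 u2 x / (1 + dotGrad d u1 u1 x)) ^ 2 * dotGrad d u1 u1 x := by
    have hterm : ∀ k, (pd d k u2 x
          - dotGrad d u1 u2 x / (1 + dotGrad d u1 u1 x) * pd d k u1 x) ^ 2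
        = pd d k u2 x * pd d k u2 x
          - 2 * (dotGrad d u1 u2 x / (1 + dotGrad d u1 u1 x)) * (pd d k u1 x * pd d k u2 x)
          + (dotGrad d u1 u2 x / (1 + dotGrad d u1 u1 x)) ^ 2
            * (pd d k u1 x * pd d k u1 x) := fun k => by ring
    simp_rw [hterm]
    rw [Finset.sum_add_distrib, Finset.sum_sub_distrib, ← Finset.mul_sum, ← Finset.mul_sum]
    rfl
  rw [hS]
  field_simp
  ring

lemma smcf_alg (A B Cc h1 h2 M : ℝ) (hA0 : 0 ≤ A) (hB0 : 0 ≤ B) (hCS : Cc ^ 2 ≤ A * B)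
    (hM1 : |h1| ≤ M) (hM2 : |h2| ≤ M) :
    |(Real.sqrt (1 + A))⁻¹ * (-h1) + h1| ≤ 2 * M * (A + B) ∧
    |(Real.sqrt (1 + B - Cc ^ 2 / (1 + A)))⁻¹ * (Cc / (1 + A) * h1 - h2) + h2|
      ≤ 2 * M * (A + B) := by
  have hM0 : 0 ≤ M := le_trans (abs_nonneg _) hM1
  have h1A : (0:ℝ) < 1 + A := by linarith
  constructor
  · set s := (Real.sqrt (1 + A))⁻¹ with hs
    have hsq1 : (1:ℝ) ≤ Real.sqrt (1 + A) := Real.one_le_sqrt.mpr (by linarith)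
    have hspos : 0 < Real.sqrt (1 + A) := by linarith
    have hs1 : s ≤ 1 := by
      rw [hs]; exact inv_le_one_of_one_le₀ hsq1
    have hs0 : 0 ≤ s := by positivity
    have hsge : 1 - A ≤ s := by
      have hsl : Real.sqrt (1 + A) ≤ 1 + A := by
        nlinarith [Real.sq_sqrt (le_of_lt h1A), Real.sqrt_nonneg (1 + A)]
      have h2' : (1 + A)⁻¹ ≤ s := by
        rw [hs]; exact inv_anti₀ hspos hsl
      have h3' : 1 - A ≤ (1 + A)⁻¹ := by
        rw [inv_eq_one_div, le_div_iff₀ h1A]; nlinarith [sq_nonneg A]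
      linarith
    have habs : |s * (-h1) + h1| = (1 - s) * |h1| := by
      rw [show s * (-h1) + h1 = (1 - s) * h1 by ring, abs_mul, abs_of_nonneg (by linarith)]
    rw [habs]
    have hfin : (1 - s) * |h1| ≤ A * M :=
      mul_le_mul (by linarith) hM1 (abs_nonneg _) hA0
    nlinarith [mul_nonneg hM0 hB0]
  · set T := 1 + B - Cc ^ 2 / (1 + A) with hT
    have hdiv : Cc ^ 2 / (1 + A) ≤ B := by
      rw [div_le_iff₀ h1A]; nlinarith
    have hdiv0 : 0 ≤ Cc ^ 2 / (1 + A) := by positivity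
    have hT1 : (1:ℝ) ≤ T := by rw [hT]; linarith
    have hTB : T ≤ 1 + B := by rw [hT]; linarith
    set L := Real.sqrt T with hL
    have hL1 : (1:ℝ) ≤ L := Real.one_le_sqrt.mpr hT1
    have hLpos : (0:ℝ) < L := by linarith
    have hLsq : L ^ 2 = T := Real.sq_sqrt (by linarith)
    have hLinv1 : L⁻¹ ≤ 1 := inv_le_one_of_one_le₀ hL1
    have hLinv0 : 0 ≤ L⁻¹ := by positivity
    have hgap : 1 - L⁻¹ ≤ B := by
      have hLB : L - 1 ≤ B := by nlinarith
      have hstep : 1 - L⁻¹ ≤ L - 1 := by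
        have hinv : L * L⁻¹ = 1 := mul_inv_cancel₀ (ne_of_gt hLpos)
        nlinarith
      linarith
    have hc' : |Cc / (1 + A)| ≤ (A + B) / 2 := by
      have habs : |Cc| ≤ (A + B) / 2 := by
        have h4 : Cc ^ 2 ≤ ((A + B) / 2) ^ 2 := by nlinarith [sq_nonneg (A - B)]
        calc |Cc| = Real.sqrt (Cc ^ 2) := (Real.sqrt_sq_eq_abs Cc).symm
          _ ≤ Real.sqrt (((A + B) / 2) ^ 2) := Real.sqrt_le_sqrt h4
          _ = (A + B) / 2 := Real.sqrt_sq (by linarith)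
      calc |Cc / (1 + A)| = |Cc| / (1 + A) := by rw [abs_div, abs_of_pos h1A]
        _ ≤ |Cc| := by
            rw [div_le_iff₀ h1A]; nlinarith [abs_nonneg Cc]
        _ ≤ (A + B) / 2 := habs
    calc |L⁻¹ * (Cc / (1 + A) * h1 - h2) + h2|
        = |L⁻¹ * (Cc / (1 + A)) * h1 + (1 - L⁻¹) * h2| := by ring_nf
      _ ≤ |L⁻¹ * (Cc / (1 + A)) * h1| + |(1 - L⁻¹) * h2| := abs_add_le _ _
      _ = L⁻¹ * |Cc / (1 + A)| * |h1| + (1 - L⁻¹) * |h2| := by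
          rw [abs_mul, abs_mul, abs_mul, abs_of_nonneg hLinv0,
            abs_of_nonneg (by linarith : (0:ℝ) ≤ 1 - L⁻¹)]
      _ ≤ ((A + B) / 2) * M + (A + B) * M := by
          have t0 : |Cc / (1 + A)| * |h1| ≤ ((A + B) / 2) * M :=
            mul_le_mul hc' hM1 (abs_nonneg _) (by linarith)
          have t1 : L⁻¹ * |Cc / (1 + A)| * |h1| ≤ |Cc / (1 + A)| * |h1| := by
            rw [mul_assoc]
            exact mul_le_of_le_one_left (mul_nonneg (abs_nonneg _) (abs_nonneg _)) hLinv1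
          have t2 : (1 - L⁻¹) * |h2| ≤ (A + B) * M :=
            mul_le_mul (by linarith) hM2 (abs_nonneg _) (by linarith)
          linarith
      _ ≤ 2 * M * (A + B) := by nlinarith [mul_nonneg hM0 (by linarith : (0:ℝ) ≤ A + B)]

/-- the normal components of the Hessian of the graph map equal minus the
Hessians of `u₁`, `u₂` up to cubic errors `O(|D²u| |Du|²)`. -/
theorem smcf_normal_hessian_expansion (d : ℕ) (hd : 2 ≤ d) :
    ∃ C > (0 : ℝ), ∀ u1 u2 : Euc d → ℝ,
      ContDiff ℝ 2 u1 → ContDiff ℝ 2 u2 →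
      ∀ x : Euc d,
        Real.sqrt (dotGrad d u1 u1 x) + Real.sqrt (dotGrad d u2 u2 x) ≤ 1 / 2 →
        ∀ i j : Fin d,
          |⟪hessVec d u1 u2 x i j, nu1 d u1 x⟫ + pd d i (pd d j u1) x| ≤
            C * Real.sqrt (‖iteratedFDeriv ℝ 2 u1 x‖ ^ 2 + ‖iteratedFDeriv ℝ 2 u2 x‖ ^ 2) *
              (dotGrad d u1 u1 x + dotGrad d u2 u2 x) ∧
          |⟪hessVec d u1 u2 x i j, nu2 d u1 u2 x⟫ + pd d i (pd d j u2) x| ≤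
            C * Real.sqrt (‖iteratedFDeriv ℝ 2 u1 x‖ ^ 2 + ‖iteratedFDeriv ℝ 2 u2 x‖ ^ 2) *
              (dotGrad d u1 u1 x + dotGrad d u2 u2 x) := by
  refine ⟨2, by norm_num, ?_⟩
  intro u1 u2 hu1 hu2 x _hsmall i j
  have hA0 : 0 ≤ dotGrad d u1 u1 x := Finset.sum_nonneg fun k _ => mul_self_nonneg _
  have hB0 : 0 ≤ dotGrad d u2 u2 x := Finset.sum_nonneg fun k _ => mul_self_nonneg _
  have hCS : (dotGrad d u1 u2 x) ^ 2 ≤ dotGrad d u1 u1 x * dotGrad d u2 u2 x := by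
    have hcs := Finset.sum_mul_sq_le_sq_mul_sq Finset.univ
      (fun k => pd d k u1 x) (fun k => pd d k u2 x)
    simpa only [dotGrad, pow_two] using hcs
  set M := Real.sqrt (‖iteratedFDeriv ℝ 2 u1 x‖ ^ 2 + ‖iteratedFDeriv ℝ 2 u2 x‖ ^ 2) with hM
  have hn1 : ‖iteratedFDeriv ℝ 2 u1 x‖ ≤ M := by
    have h := Real.sqrt_le_sqrt (show ‖iteratedFDeriv ℝ 2 u1 x‖ ^ 2 ≤
        ‖iteratedFDeriv ℝ 2 u1 x‖ ^ 2 + ‖iteratedFDeriv ℝ 2 u2 x‖ ^ 2 by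
      nlinarith [sq_nonneg (‖iteratedFDeriv ℝ 2 u2 x‖)])
    rwa [Real.sqrt_sq (norm_nonneg _)] at h
  have hn2 : ‖iteratedFDeriv ℝ 2 u2 x‖ ≤ M := by
    have h := Real.sqrt_le_sqrt (show ‖iteratedFDeriv ℝ 2 u2 x‖ ^ 2 ≤
        ‖iteratedFDeriv ℝ 2 u1 x‖ ^ 2 + ‖iteratedFDeriv ℝ 2 u2 x‖ ^ 2 by
      nlinarith [sq_nonneg (‖iteratedFDeriv ℝ 2 u1 x‖)])
    rwa [Real.sqrt_sq (norm_nonneg _)] at h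
  have hM1 : |pd d i (pd d j u1) x| ≤ M := le_trans (pd_pd_le d u1 hu1 x i j) hn1
  have hM2 : |pd d i (pd d j u2) x| ≤ M := le_trans (pd_pd_le d u2 hu2 x i j) hn2
  have key := smcf_alg (dotGrad d u1 u1 x) (dotGrad d u2 u2 x) (dotGrad d u1 u2 x)
    (pd d i (pd d j u1) x) (pd d i (pd d j u2) x) M hA0 hB0 hCS hM1 hM2
  constructor
  · rw [inner_hessVec_nu1]
    exact key.1
  · rw [inner_hessVec_nu2, lamSMCF_eq d u1 u2 x hA0]
    exact key.2
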